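/- The term rewriting system {Scp(SR(x)) → SR(Scp(x)), Scp(SR(x)) → SR(x), Scp(SR(x)) → x, Scp(SR(x)) → SR(Scp(Scp(x)))} over unary symbols Scp, SR is terminating. -/

import Mathlib

/-- The unary function symbols of the TRS encoding the forking diagrams for the
`(cp)` transformation. -/
inductive Sym16 : Type where
  | Scp : Sym16
  | SR : Sym16
  deriving DecidableEq

open Sym16 in
/-- The rules, as pairs (lhs, rhs) of strings of unary symbols. -/
def Rcp : List (List Sym16 × List Sym16) :=
  [([Scp, SR], [SR, Scp]),
   ([Scp, SR], [SR]),
   ([Scp, SR], []),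
   ([Scp, SR], [SR, Scp, Scp])]

/-- One rewrite step (terms are strings of unary symbols; rules apply at any
position). -/
def RewRcp (t u : List Sym16) : Prop :=
  ∃ pre tail lhs rhs, (lhs, rhs) ∈ Rcp ∧ t = pre ++ lhs ++ tail ∧ u = pre ++ rhs ++ tail

namespace Stmt16Aux
open Sym16

/-- Number of `SR` symbols. -/
def r : List Sym16 → ℕ
  | [] => 0
  | SR :: w => r w + 1
  | Scp :: w => r w

/-- Measure: each `Scp` contributes `3 ^ (number of SR to its right)`. -/
def m : List Sym16 → ℕ
  | [] => 0
  | SR :: w => m w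
  | Scp :: w => 3 ^ r w + m w

lemma mono (pre : List Sym16) {v v' : List Sym16}
    (hr : r v' ≤ r v) (hm : m v' < m v) :
    r (pre ++ v') ≤ r (pre ++ v) ∧ m (pre ++ v') < m (pre ++ v) := by
  induction pre with
  | nil => exact ⟨hr, hm⟩
  | cons a p ih =>
    cases a with
    | SR => simpa [r, m] using ih
    | Scp =>
      refine ⟨by simpa [r] using ih.1, ?_⟩
      simp only [List.cons_append, m]
      exact Nat.add_lt_add_of_le_of_lt (Nat.pow_le_pow_right (by norm_num) ih.1) ih.2

lemma step_decrease {t u : List Sym16} (h : RewRcp t u) : m u < m t := by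
  obtain ⟨pre, tail, lhs, rhs, hmem, ht, hu⟩ := h
  subst ht hu
  rw [List.append_assoc, List.append_assoc]
  simp only [Rcp, List.mem_cons, List.mem_singleton, Prod.mk.injEq] at hmem
  have h3 : (0:ℕ) < 3 ^ r tail := Nat.pow_pos (by norm_num)
  rcases hmem with ⟨h1, h2⟩ | ⟨h1, h2⟩ | ⟨h1, h2⟩ | ⟨h1, h2⟩ | h
  · subst h1 h2
    exact (mono pre (by simp [r]) (by simp [m, r]; omega)).2
  · subst h1 h2
    exact (mono pre (by simp [r]) (by simp [m, r])).2
  · subst h1 h2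
    exact (mono pre (by simp [r]) (by simp [m, r])).2
  · subst h1 h2
    refine (mono pre (by simp [r]) ?_).2
    simp only [m, r, List.cons_append, List.nil_append, List.append_eq]
    have h4 : 3 ^ (r tail + 1) = 3 ^ r tail * 3 := pow_succ 3 (r tail)
    omega
  · exact absurd h List.not_mem_nil

end Stmt16Aux

/-- The TRS for the `(cp)` forking diagrams is terminating. -/
theorem stmt_16 : WellFounded (fun u t : List Sym16 => RewRcp t u) := by
  have : Subrelation (fun u t : List Sym16 => RewRcp t u)
      (InvImage (· < ·) Stmt16Aux.m) := fun h => Stmt16Aux.step_decrease h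
  exact Subrelation.wf this (InvImage.wf _ Nat.lt_wfRel.wf)
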